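/- Let e = {v₁, …, v_k} be a set of k ≥ 2 vertices, and let G_e be the gadget hypergraph with vertex set e ∪ {v_i⁺ : 1 ≤ i ≤ k−1} ∪ {v_i⁻ : 2 ≤ i ≤ k} (all new vertices distinct) and edges: the k−1 inner edges {v_i⁺, v_{i+1}⁻} for 1 ≤ i ≤ k−1, and the k outer edges {v₁, v₁⁺}, {v_k, v_k⁻}, and {v_i, v_i⁻, v_i⁺} for 2 ≤ i ≤ k−1. Then the set of all k outer edges is a matching of G_e, and it is the unique matching of G_e of size ≥ k. -/
import Mathlib


/-- Vertices of the gadget: `vO i` are the original vertices `vᵢ` of the edge `e`,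
`vP i` are the added vertices `vᵢ⁺`, `vM i` are the added vertices `vᵢ⁻`. -/
abbrev GVert := ℕ ⊕ (ℕ ⊕ ℕ)

def vO (i : ℕ) : GVert := Sum.inl i
def vP (i : ℕ) : GVert := Sum.inr (Sum.inl i)
def vM (i : ℕ) : GVert := Sum.inr (Sum.inr i)

/-- The inner edge `{vᵢ⁺, vᵢ₊₁⁻}`. -/
def innerE (i : ℕ) : Finset GVert := {vP i, vM (i + 1)}

/-- The outer edges: `{v₁, v₁⁺}`, `{v_k, v_k⁻}`, and `{vᵢ, vᵢ⁻, vᵢ⁺}` for `2 ≤ i ≤ k-1`. -/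
def outerE (k i : ℕ) : Finset GVert :=
  if i = 1 then {vO 1, vP 1} else if i = k then {vO k, vM k} else {vO i, vM i, vP i}

/-- The set of the `k-1` inner edges of the gadget. -/
def Inners (k : ℕ) : Set (Finset GVert) := {e | ∃ i, 1 ≤ i ∧ i ≤ k - 1 ∧ e = innerE i}

/-- The set of the `k` outer edges of the gadget. -/
def Outers (k : ℕ) : Set (Finset GVert) := {e | ∃ i, 1 ≤ i ∧ i ≤ k ∧ e = outerE k i}

/-- The edge set of the gadget `G_e` on an edge of size `k`. -/
def GadgetEdges (k : ℕ) : Set (Finset GVert) := Inners k ∪ Outers k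

/-- A matching of the gadget: a set of pairwise disjoint edges of `G_e`. -/
def IsGadgetMatching (k : ℕ) (M : Set (Finset GVert)) : Prop :=
  M ⊆ GadgetEdges k ∧ M.Pairwise fun a b => Disjoint a b

-- aux
def gidx : GVert → ℕ
  | Sum.inl i => i
  | Sum.inr (Sum.inl i) => i
  | Sum.inr (Sum.inr _) => 0

def idx (e : Finset GVert) : ℕ := e.sup gidx

lemma idx_inner (i : ℕ) : idx (innerE i) = i := by
  simp [idx, innerE, vP, vM, gidx]

lemma idx_outer (k i : ℕ) (h1 : 1 ≤ i) : idx (outerE k i) = i := by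
  unfold outerE
  split
  · simp_all [idx, vO, vP, gidx]
  · split
    · simp_all [idx, vO, vM, gidx]
    · simp [idx, vO, vM, vP, gidx]

lemma outer_subset (k i : ℕ) : outerE k i ⊆ {vO i, vM i, vP i} := by
  unfold outerE
  split
  · subst ‹i = 1›; intro x hx; simp_all [Finset.mem_insert]; tauto
  · split
    · subst ‹i = k›; intro x hx; simp_all [Finset.mem_insert]; tauto
    · intro x hx; exact hx

lemma vO_mem_outer (k i : ℕ) : vO i ∈ outerE k i := by
  unfold outerE
  split
  · subst ‹i = 1›; simp
  · split
    · subst ‹i = k›; simp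
    · simp

lemma outer_disj (k : ℕ) {i j : ℕ} (h : i ≠ j) : Disjoint (outerE k i) (outerE k j) := by
  refine Finset.disjoint_left.2 fun x hx hx' => ?_
  have h1 := outer_subset k i hx
  have h2 := outer_subset k j hx'
  simp [vO, vM, vP, Finset.mem_insert] at h1 h2
  rcases h1 with h1|h1|h1 <;> rcases h2 with h2|h2|h2 <;> simp_all

lemma outer_inj (k : ℕ) {i j : ℕ} (h : outerE k i = outerE k j) : i = j := by
  have := outer_subset k j (h ▸ vO_mem_outer k i)
  simp [vO, vM, vP, Finset.mem_insert] at this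
  tauto

lemma inner_ne_outer (k i j : ℕ) : innerE i ≠ outerE k j := by
  intro h
  have := h ▸ vO_mem_outer k j
  simp [innerE, vO, vP, vM, Finset.mem_insert] at this

lemma inner_inj {i j : ℕ} (h : innerE i = innerE j) : i = j := by
  have : vP i ∈ innerE j := h ▸ (by simp [innerE])
  simp [innerE, vP, vM, Finset.mem_insert] at this
  exact this

lemma vP_mem_outer (k i : ℕ) (h1 : 1 ≤ i) (h2 : i ≤ k - 1) (hk : 2 ≤ k) :
    vP i ∈ outerE k i := by
  unfold outerE
  split
  · subst ‹i = 1›; simp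
  · split
    · omega
    · simp

lemma vM_mem_outer (k i : ℕ) (h1 : 2 ≤ i) (h2 : i ≤ k) : vM i ∈ outerE k i := by
  unfold outerE
  split
  · omega
  · split
    · subst ‹i = k›; simp
    · simp

lemma not_disj_inner_outer (k i : ℕ) (h1 : 1 ≤ i) (h2 : i ≤ k - 1) (hk : 2 ≤ k) :
    ¬ Disjoint (innerE i) (outerE k i) := by
  intro h
  exact Finset.disjoint_left.1 h (by simp [innerE]) (vP_mem_outer k i h1 h2 hk)

lemma not_disj_inner_outer' (k i : ℕ) (h1 : 1 ≤ i) (h2 : i ≤ k - 1) (hk : 2 ≤ k) :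
    ¬ Disjoint (innerE i) (outerE k (i + 1)) := by
  intro h
  exact Finset.disjoint_left.1 h (by simp [innerE]) (vM_mem_outer k (i+1) (by omega) (by omega))

/-- The `k` outer edges form a matching of the gadget `G_e`, and this is the unique
matching of `G_e` of size at least `k`. -/
theorem stmt_8 (k : ℕ) (hk : 2 ≤ k) :
    IsGadgetMatching k (Outers k) ∧ (Outers k).ncard = k ∧
      ∀ M : Set (Finset GVert), IsGadgetMatching k M → k ≤ M.ncard → M = Outers k := by
  have hOcard : (Outers k).ncard = k := by
    have himg : Outers k = outerE k '' ↑(Finset.Icc 1 k) := by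
      ext e
      simp only [Outers, Set.mem_setOf_eq, Set.mem_image, Finset.coe_Icc, Set.mem_Icc]
      constructor
      · rintro ⟨i, h1, h2, rfl⟩; exact ⟨i, ⟨h1, h2⟩, rfl⟩
      · rintro ⟨i, ⟨h1, h2⟩, rfl⟩; exact ⟨i, h1, h2, rfl⟩
    rw [himg, Set.ncard_image_of_injOn (fun a _ b _ h => outer_inj k h),
      Set.ncard_coe_finset, Nat.card_Icc]
    omega
  refine ⟨⟨fun e he => Or.inr he, ?_⟩, hOcard, ?_⟩
  · rintro a ⟨i, _, _, rfl⟩ b ⟨j, _, _, rfl⟩ hne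
    exact outer_disj k (fun h => hne (h ▸ rfl))
  · intro M hM hcard
    obtain ⟨hsub, hpw⟩ := hM
    have hclass : ∀ e ∈ M, (∃ i, 1 ≤ i ∧ i ≤ k - 1 ∧ e = innerE i) ∨
        (∃ i, 1 ≤ i ∧ i ≤ k ∧ e = outerE k i) := fun e he => hsub he
    have hinj : Set.InjOn idx M := by
      intro e1 he1 e2 he2 heq
      by_contra hne
      have hd := hpw he1 he2 hne
      rcases hclass e1 he1 with ⟨i, hi1, hi2, rfl⟩ | ⟨i, hi1, hi2, rfl⟩ <;>
        rcases hclass e2 he2 with ⟨j, hj1, hj2, rfl⟩ | ⟨j, hj1, hj2, rfl⟩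
      · rw [idx_inner, idx_inner] at heq; subst heq; exact hne rfl
      · rw [idx_inner, idx_outer k j hj1] at heq; subst heq
        exact not_disj_inner_outer k i hi1 hi2 hk hd
      · rw [idx_inner, idx_outer k i hi1] at heq
        subst heq
        exact not_disj_inner_outer k i hj1 hj2 hk hd.symm
      · rw [idx_outer k i hi1, idx_outer k j hj1] at heq; subst heq; exact hne rfl
    have himgsub : idx '' M ⊆ ↑(Finset.Icc 1 k) := by
      rintro _ ⟨e, he, rfl⟩
      rcases hclass e he with ⟨i, hi1, hi2, rfl⟩ | ⟨i, hi1, hi2, rfl⟩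
      · rw [idx_inner]; simp only [Finset.coe_Icc, Set.mem_Icc]; omega
      · rw [idx_outer k i hi1]; simp only [Finset.coe_Icc, Set.mem_Icc]; omega
    have himgeq : idx '' M = ↑(Finset.Icc 1 k) := by
      apply Set.eq_of_subset_of_ncard_le himgsub ?_ (Finset.finite_toSet _)
      rw [Set.ncard_image_of_injOn hinj, Set.ncard_coe_finset, Nat.card_Icc]
      omega
    have hsurj : ∀ j, 1 ≤ j → j ≤ k → ∃ e ∈ M, idx e = j := by
      intro j h1 h2
      have : (j : ℕ) ∈ idx '' M := by
        rw [himgeq]; simp only [Finset.coe_Icc, Set.mem_Icc]; omega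
      rcases this with ⟨e, he, heq⟩; exact ⟨e, he, heq⟩
    have hdown : ∀ d, d ≤ k - 1 → outerE k (k - d) ∈ M := by
      intro d
      induction d with
      | zero =>
        intro _
        obtain ⟨e, he, heq⟩ := hsurj k (by omega) le_rfl
        rcases hclass e he with ⟨i, hi1, hi2, rfl⟩ | ⟨i, hi1, hi2, rfl⟩
        · rw [idx_inner] at heq; omega
        · rw [idx_outer k i hi1] at heq; subst heq
          simpa using he
      | succ d ih =>
        intro hd
        have hout := ih (by omega)
        obtain ⟨e, he, heq⟩ := hsurj (k - (d + 1)) (by omega) (by omega)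
        rcases hclass e he with ⟨i, hi1, hi2, rfl⟩ | ⟨i, hi1, hi2, rfl⟩
        · exfalso
          rw [idx_inner] at heq
          have h1 : i + 1 = k - d := by omega
          have hdisj := hpw he hout (inner_ne_outer k i (k - d))
          rw [← h1] at hdisj
          exact not_disj_inner_outer' k i hi1 hi2 hk hdisj
        · rw [idx_outer k i hi1] at heq; subst heq
          exact he
    have hOsub : Outers k ⊆ M := by
      rintro _ ⟨j, hj1, hj2, rfl⟩
      have hj : j = k - (k - j) := by omega
      rw [hj]; exact hdown (k - j) (by omega)
    apply Set.Subset.antisymm ?_ hOsub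
    intro e he
    rcases hclass e he with ⟨i, hi1, hi2, rfl⟩ | ⟨i, hi1, hi2, rfl⟩
    · exfalso
      have houter : outerE k i ∈ M := hOsub ⟨i, hi1, by omega, rfl⟩
      exact not_disj_inner_outer k i hi1 hi2 hk
        (hpw he houter (inner_ne_outer k i i))
    · exact ⟨i, hi1, hi2, rfl⟩
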